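/- Let B be a surjective Rota-Baxter operator on a commutative Hopf heap (C, Δ, ε, [−,−,−]) over a field k with ε ∘ B = ε. Define Δ'(a) := [a₁, B(a₄), B(a₂)] ⊗ a₃ for a ∈ C (subscripts from iterated Δ). Then (C, Δ', ε) is a coalgebra (Δ' is coassociative with counit ε), the ternary operation [−,−,−] is a coalgebra map with respect to Δ' (Δ'([a,b,c]) = [a_{1'}, b_{2'}, c_{1'}] ⊗ [a_{2'}, b_{1'}, c_{2'}] in Sweedler notation for Δ'), and [a_{1'}, a_{2'}, b] = ε(a)b = [b, a_{1'}, a_{2'}]; hence C_B := (C, Δ', ε, [−,−,−]) is a Hopf heap, called the descendent Hopf heap. -/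
import Mathlib


open TensorProduct

noncomputable section

variable (k : Type*) [Field k]

section Shuffles

variable (A B P Q R S : Type*)
  [AddCommGroup A] [Module k A] [AddCommGroup B] [Module k B]
  [AddCommGroup P] [Module k P] [AddCommGroup Q] [Module k Q]
  [AddCommGroup R] [Module k R] [AddCommGroup S] [Module k S]

/-- `(a ⊗ b) ⊗ ((p ⊗ q) ⊗ (r ⊗ s)) ↦ (a ⊗ (q ⊗ r)) ⊗ (b ⊗ (p ⊗ s))`, the shuffle appearing in
the compatibility of a Hopf-heap bracket with comultiplication:
`Δ([a,b,c]) = [a₁,b₂,c₁] ⊗ [a₂,b₁,c₂]`. -/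
def sweedlerShuffle :
    ((A ⊗[k] B) ⊗[k] ((P ⊗[k] Q) ⊗[k] (R ⊗[k] S))) →ₗ[k]
      ((A ⊗[k] (Q ⊗[k] R)) ⊗[k] (B ⊗[k] (P ⊗[k] S))) :=
  (tensorTensorTensorComm k A B (Q ⊗[k] R) (P ⊗[k] S)).toLinearMap ∘ₗ
    (TensorProduct.map LinearMap.id
      ((tensorTensorTensorComm k Q P R S).toLinearMap ∘ₗ
        TensorProduct.map (TensorProduct.comm k P Q).toLinearMap LinearMap.id))

/-- `u₁ ⊗ (u₂ ⊗ (u₃ ⊗ u₄)) ↦ (u₁ ⊗ (u₄ ⊗ u₂)) ⊗ u₃`, the shuffle appearing in the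
Rota–Baxter identity. -/
def rbShuffle :
    (A ⊗[k] (P ⊗[k] (Q ⊗[k] R))) →ₗ[k] ((A ⊗[k] (R ⊗[k] P)) ⊗[k] Q) :=
  (TensorProduct.assoc k A (R ⊗[k] P) Q).symm.toLinearMap ∘ₗ
    TensorProduct.map LinearMap.id
      ((TensorProduct.comm k Q (R ⊗[k] P)).toLinearMap ∘ₗ
        (TensorProduct.assoc k Q R P).toLinearMap ∘ₗ
        (TensorProduct.comm k P (Q ⊗[k] R)).toLinearMap)

end Shuffles

section Mul

variable {C : Type*} [AddCommGroup C] [Module k C]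

/-- Right multiplication `a ↦ μ (a ⊗ b)` by a fixed element, for a bilinear product `μ`. -/
def rmulBy (μ : (C ⊗[k] C) →ₗ[k] C) (b : C) : C →ₗ[k] C :=
  μ ∘ₗ ((TensorProduct.mk k C C).flip b)

end Mul

section Heap

variable {C : Type*} [AddCommGroup C] [Module k C] [Coalgebra k C]

/-- Iterated comultiplication `a ↦ a₁ ⊗ (a₂ ⊗ a₃)`. -/
def comul2 : C →ₗ[k] (C ⊗[k] (C ⊗[k] C)) :=
  (TensorProduct.map LinearMap.id Coalgebra.comul) ∘ₗ Coalgebra.comul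

/-- Iterated comultiplication `a ↦ a₁ ⊗ (a₂ ⊗ (a₃ ⊗ a₄))`. -/
def comul3 : C →ₗ[k] (C ⊗[k] (C ⊗[k] (C ⊗[k] C))) :=
  (TensorProduct.map LinearMap.id (comul2 k)) ∘ₗ Coalgebra.comul

/-- The pointwise ternary bracket `[a,b,c]` of a Hopf heap with structure map `χ`. -/
def br (χ : (C ⊗[k] (C ⊗[k] C)) →ₗ[k] C) (a b c : C) : C := χ (a ⊗ₜ[k] (b ⊗ₜ[k] c))

/-- `x` is a group-like element of the coalgebra `C`. -/
def IsGrouplike (x : C) : Prop :=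
  Coalgebra.comul (R := k) x = x ⊗ₜ[k] x ∧ Coalgebra.counit (R := k) x = 1

/-- `(C, Δ, ε, χ)` is a Hopf heap: `χ` is a coalgebra map `C ⊗ C^cop ⊗ C → C`
(counit and comultiplication conditions, the latter in the Sweedler form
`Δ([a,b,c]) = [a₁,b₂,c₁] ⊗ [a₂,b₁,c₂]`), the bracket is associative
(`[[a,b,c],d,h] = [a,b,[c,d,h]]`), and `[c₁,c₂,a] = ε(c)a = [a,c₁,c₂]`. -/
structure IsHopfHeap (χ : (C ⊗[k] (C ⊗[k] C)) →ₗ[k] C) : Prop where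
  counit_br : ∀ a b c : C,
    Coalgebra.counit (R := k) (br k χ a b c) =
      Coalgebra.counit (R := k) a * Coalgebra.counit (R := k) b * Coalgebra.counit (R := k) c
  comul_br : ∀ a b c : C,
    Coalgebra.comul (R := k) (br k χ a b c) =
      TensorProduct.map χ χ (sweedlerShuffle k C C C C C C
        ((Coalgebra.comul (R := k) a) ⊗ₜ[k]
          ((Coalgebra.comul (R := k) b) ⊗ₜ[k] (Coalgebra.comul (R := k) c))))
  assoc_br : ∀ a b c d h : C,
    br k χ (br k χ a b c) d h = br k χ a b (br k χ c d h)
  left_cancel : ∀ c a : C,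
    χ ((TensorProduct.assoc k C C C) ((Coalgebra.comul (R := k) c) ⊗ₜ[k] a)) =
      Coalgebra.counit (R := k) c • a
  right_cancel : ∀ c a : C,
    χ (a ⊗ₜ[k] (Coalgebra.comul (R := k) c)) = Coalgebra.counit (R := k) c • a

/-- `B` is a Rota–Baxter operator on the Hopf heap `(C, Δ, χ)`:
`B [a,b,c] = [B a, B b, B c]` and
`B(a₁) ⊗ B(a₂) = [B(a)₁, B(B(a)₄), B(B(a)₂)] ⊗ B(a)₃`. -/
structure IsRBOp (χ : (C ⊗[k] (C ⊗[k] C)) →ₗ[k] C) (B : C →ₗ[k] C) : Prop where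
  map_br : ∀ a b c : C, B (br k χ a b c) = br k χ (B a) (B b) (B c)
  rb : ∀ a : C,
    TensorProduct.map B B (Coalgebra.comul (R := k) a) =
      TensorProduct.map (χ ∘ₗ TensorProduct.map LinearMap.id (TensorProduct.map B B))
        LinearMap.id (rbShuffle k C C C C (comul3 k (B a)))

/-- The multiplication `a ·ₓ b = [a, x, b]` of the Hopf algebra `H_x(C)`, as a linear map. -/
def heapMul (χ : (C ⊗[k] (C ⊗[k] C)) →ₗ[k] C) (x : C) : (C ⊗[k] C) →ₗ[k] C :=
  χ ∘ₗ TensorProduct.map LinearMap.id (TensorProduct.mk k C C x)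

/-- The antipode `S_x(a) = [x, a, x]` of the Hopf algebra `H_x(C)`, as a linear map. -/
def heapAntipode (χ : (C ⊗[k] (C ⊗[k] C)) →ₗ[k] C) (x : C) : C →ₗ[k] C :=
  χ ∘ₗ (TensorProduct.mk k C (C ⊗[k] C) x) ∘ₗ ((TensorProduct.mk k C C).flip x)

end Heap

section HeapHom

variable {C D : Type*} [AddCommGroup C] [Module k C] [Coalgebra k C]
  [AddCommGroup D] [Module k D] [Coalgebra k D]

/-- `f` is a homomorphism of Hopf heaps: a coalgebra map preserving the bracket. -/
def IsHeapHom (χC : (C ⊗[k] (C ⊗[k] C)) →ₗ[k] C) (χD : (D ⊗[k] (D ⊗[k] D)) →ₗ[k] D)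
    (f : C →ₗ[k] D) : Prop :=
  (∀ a : C, Coalgebra.comul (R := k) (f a) = TensorProduct.map f f (Coalgebra.comul (R := k) a)) ∧
  (∀ a : C, Coalgebra.counit (R := k) (f a) = Coalgebra.counit (R := k) a) ∧
  (∀ a b c : C, f (br k χC a b c) = br k χD (f a) (f b) (f c))

end HeapHom

section HopfAlg

variable (H : Type*) [Ring H] [HopfAlgebra k H]

/-- The Hopf-heap structure map `a ⊗ b ⊗ c ↦ a · S(b) · c` of a Hopf algebra. -/
def hopfHeapChi : (H ⊗[k] (H ⊗[k] H)) →ₗ[k] H :=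
  (LinearMap.mul' k H) ∘ₗ TensorProduct.map LinearMap.id
    ((LinearMap.mul' k H) ∘ₗ TensorProduct.map (HopfAlgebra.antipode (R := k)) LinearMap.id)

/-- The triple multiplication `a ⊗ (b ⊗ c) ↦ a·(b·c)`. -/
def mulTriple : (H ⊗[k] (H ⊗[k] H)) →ₗ[k] H :=
  (LinearMap.mul' k H) ∘ₗ TensorProduct.map LinearMap.id (LinearMap.mul' k H)

end HopfAlg

end
/-- The descendent comultiplication `Δ'(a) := [a₁, B(a₄), B(a₂)] ⊗ a₃`. -/
noncomputable def descComul {k : Type*} [Field k] {C : Type*} [AddCommGroup C] [Module k C]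
    [Coalgebra k C] (χ : (C ⊗[k] (C ⊗[k] C)) →ₗ[k] C) (B : C →ₗ[k] C) :
    C →ₗ[k] (C ⊗[k] C) :=
  (TensorProduct.map (χ ∘ₗ TensorProduct.map LinearMap.id (TensorProduct.map B B))
    LinearMap.id) ∘ₗ (rbShuffle k C C C C) ∘ₗ (comul3 k)


section MyAux

variable {k : Type*} [Field k] {C : Type*} [AddCommGroup C] [Module k C] [Coalgebra k C]

lemma myKey (χ : (C ⊗[k] (C ⊗[k] C)) →ₗ[k] C) (B : C →ₗ[k] C) (hB : IsRBOp k χ B) (x : C) :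
    descComul χ B (B x) = TensorProduct.map B B (Coalgebra.comul x) := by
  rw [hB.rb x]; rfl

lemma myL1 (χ : (C ⊗[k] (C ⊗[k] C)) →ₗ[k] C) (B : C →ₗ[k] C) (hB : IsRBOp k χ B) :
    B ∘ₗ χ = χ ∘ₗ TensorProduct.map B (TensorProduct.map B B) := by
  have h := hB.map_br
  simp only [br] at h
  ext a b c
  simp [h]

lemma myL4 (χ : (C ⊗[k] (C ⊗[k] C)) →ₗ[k] C) (B : C →ₗ[k] C) (hB : IsRBOp k χ B) :
    χ ∘ₗ (TensorProduct.assoc k C C C).toLinearMap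
        ∘ₗ TensorProduct.map (TensorProduct.map B B) B =
      B ∘ₗ χ ∘ₗ (TensorProduct.assoc k C C C).toLinearMap := by
  have h := hB.map_br
  simp only [br] at h
  ext a b c
  simp [h]

lemma myShuffleNat (χ : (C ⊗[k] (C ⊗[k] C)) →ₗ[k] C) (B : C →ₗ[k] C) (hB : IsRBOp k χ B) :
    TensorProduct.map χ χ ∘ₗ sweedlerShuffle k C C C C C C ∘ₗ
      TensorProduct.map (TensorProduct.map B B)
        (TensorProduct.map (TensorProduct.map B B) (TensorProduct.map B B)) =
    TensorProduct.map B B ∘ₗ TensorProduct.map χ χ ∘ₗ sweedlerShuffle k C C C C C C := by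
  have h := hB.map_br
  simp only [br] at h
  ext a b p q r s
  simp [sweedlerShuffle, h, tensorTensorTensorComm_tmul]

end MyAux

/-- for a surjective Rota–Baxter operator `B` on a commutative Hopf heap with
`ε ∘ B = ε`, the descendent comultiplication `Δ'(a) = [a₁, B(a₄), B(a₂)] ⊗ a₃` makes
`C_B = (C, Δ', ε, χ)` a Hopf heap. -/
theorem descendent_hopfHeap {k : Type*} [Field k] {C : Type*} [AddCommGroup C] [Module k C]
    [Coalgebra k C] (χ : (C ⊗[k] (C ⊗[k] C)) →ₗ[k] C) (hχ : IsHopfHeap k χ)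
    (hcomm : ∀ a b c : C, br k χ a b c = br k χ c b a)
    (B : C →ₗ[k] C) (hB : IsRBOp k χ B)
    (hsurj : Function.Surjective ⇑B)
    (hεB : ∀ a : C, Coalgebra.counit (R := k) (B a) = Coalgebra.counit (R := k) a) :
    -- `Δ'` is coassociative
    (∀ a : C, (TensorProduct.assoc k C C C)
        ((TensorProduct.map (descComul χ B) LinearMap.id) (descComul χ B a)) =
      (TensorProduct.map LinearMap.id (descComul χ B)) (descComul χ B a)) ∧
    -- `ε` is a counit for `Δ'`
    (∀ a : C, (TensorProduct.lid k C)
        ((TensorProduct.map (Coalgebra.counit (R := k)) LinearMap.id) (descComul χ B a)) = a) ∧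
    (∀ a : C, (TensorProduct.rid k C)
        ((TensorProduct.map LinearMap.id (Coalgebra.counit (R := k))) (descComul χ B a)) = a) ∧
    -- the bracket is a coalgebra map with respect to `Δ'`:
    -- `Δ'([a,b,c]) = [a_{1'}, b_{2'}, c_{1'}] ⊗ [a_{2'}, b_{1'}, c_{2'}]`
    (∀ a b c : C, descComul χ B (br k χ a b c) =
      TensorProduct.map χ χ (sweedlerShuffle k C C C C C C
        ((descComul χ B a) ⊗ₜ[k] ((descComul χ B b) ⊗ₜ[k] (descComul χ B c))))) ∧
    -- `[a_{1'}, a_{2'}, b] = ε(a)b = [b, a_{1'}, a_{2'}]`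
    (∀ a b : C, χ ((TensorProduct.assoc k C C C) ((descComul χ B a) ⊗ₜ[k] b)) =
      Coalgebra.counit (R := k) a • b) ∧
    (∀ a b : C, χ (b ⊗ₜ[k] (descComul χ B a)) = Coalgebra.counit (R := k) a • b) := by
  have key := myKey χ B hB
  have keyc : descComul χ B ∘ₗ B = TensorProduct.map B B ∘ₗ Coalgebra.comul :=
    LinearMap.ext key
  have hεBc : (Coalgebra.counit (R := k) (A := C)) ∘ₗ B = Coalgebra.counit :=
    LinearMap.ext hεB
  refine ⟨?_, ?_, ?_, ?_, ?_, ?_⟩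
  · -- coassociativity
    intro a
    obtain ⟨x, rfl⟩ := hsurj a
    rw [key x]
    have c1 : TensorProduct.map (descComul χ B) (LinearMap.id (R := k) (M := C)) ∘ₗ
        TensorProduct.map B B =
        TensorProduct.map (TensorProduct.map B B) B ∘ₗ
          TensorProduct.map Coalgebra.comul LinearMap.id := by
      rw [← TensorProduct.map_comp, ← TensorProduct.map_comp, keyc,
        LinearMap.id_comp, LinearMap.comp_id]
    have c2 : TensorProduct.map (LinearMap.id (R := k) (M := C)) (descComul χ B) ∘ₗ
        TensorProduct.map B B =
        TensorProduct.map B (TensorProduct.map B B) ∘ₗ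
          TensorProduct.map LinearMap.id Coalgebra.comul := by
      rw [← TensorProduct.map_comp, ← TensorProduct.map_comp, keyc,
        LinearMap.id_comp, LinearMap.comp_id]
    have e1 := LinearMap.congr_fun c1 (Coalgebra.comul x)
    have e2 := LinearMap.congr_fun c2 (Coalgebra.comul x)
    simp only [LinearMap.comp_apply] at e1 e2
    rw [e1, e2]
    rw [← TensorProduct.map_map_assoc]
    congr 1
    have h1 : TensorProduct.map (Coalgebra.comul (R := k)) (LinearMap.id (R := k) (M := C)) =
        (Coalgebra.comul (R := k) (A := C)).rTensor C := rfl
    have h2 : TensorProduct.map (LinearMap.id (R := k) (M := C)) (Coalgebra.comul (R := k)) =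
        (Coalgebra.comul (R := k) (A := C)).lTensor C := rfl
    rw [h1, h2, Coalgebra.coassoc_apply]
  · -- left counit
    intro a
    obtain ⟨x, rfl⟩ := hsurj a
    rw [key x]
    have c1 : TensorProduct.map (Coalgebra.counit (R := k) (A := C)) (LinearMap.id (R := k) (M := C)) ∘ₗ
        TensorProduct.map B B =
        TensorProduct.map (LinearMap.id (R := k) (M := k)) B ∘ₗ
          TensorProduct.map Coalgebra.counit LinearMap.id := by
      rw [← TensorProduct.map_comp, ← TensorProduct.map_comp, hεBc]
      simp
    have e1 := LinearMap.congr_fun c1 (Coalgebra.comul x)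
    simp only [LinearMap.comp_apply] at e1
    have h1 : TensorProduct.map (Coalgebra.counit (R := k) (A := C)) (LinearMap.id (R := k) (M := C))
        (Coalgebra.comul x) = (1 : k) ⊗ₜ[k] x := Coalgebra.rTensor_counit_comul x
    rw [e1, h1]
    simp
  · -- right counit
    intro a
    obtain ⟨x, rfl⟩ := hsurj a
    rw [key x]
    have c1 : TensorProduct.map (LinearMap.id (R := k) (M := C)) (Coalgebra.counit (R := k) (A := C)) ∘ₗ
        TensorProduct.map B B =
        TensorProduct.map B (LinearMap.id (R := k) (M := k)) ∘ₗ
          TensorProduct.map LinearMap.id Coalgebra.counit := by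
      rw [← TensorProduct.map_comp, ← TensorProduct.map_comp, hεBc]
      simp
    have e1 := LinearMap.congr_fun c1 (Coalgebra.comul x)
    simp only [LinearMap.comp_apply] at e1
    have h1 : TensorProduct.map (LinearMap.id (R := k) (M := C)) (Coalgebra.counit (R := k) (A := C))
        (Coalgebra.comul x) = x ⊗ₜ[k] (1 : k) := Coalgebra.lTensor_counit_comul x
    rw [e1, h1]
    simp
  · -- bracket is a coalgebra map
    intro a b c
    obtain ⟨x, rfl⟩ := hsurj a
    obtain ⟨y, rfl⟩ := hsurj b
    obtain ⟨z, rfl⟩ := hsurj c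
    rw [← hB.map_br, key, hχ.comul_br]
    have ht : (descComul χ B (B x)) ⊗ₜ[k] ((descComul χ B (B y)) ⊗ₜ[k] (descComul χ B (B z))) =
        TensorProduct.map (TensorProduct.map B B)
          (TensorProduct.map (TensorProduct.map B B) (TensorProduct.map B B))
          ((Coalgebra.comul (R := k) x) ⊗ₜ[k]
            ((Coalgebra.comul (R := k) y) ⊗ₜ[k] (Coalgebra.comul (R := k) z))) := by
      rw [key x, key y, key z]
      simp [TensorProduct.map_tmul]
    rw [ht]
    have := LinearMap.congr_fun (myShuffleNat χ B hB)
      ((Coalgebra.comul (R := k) x) ⊗ₜ[k]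
        ((Coalgebra.comul (R := k) y) ⊗ₜ[k] (Coalgebra.comul (R := k) z)))
    simp only [LinearMap.comp_apply] at this
    rw [this]
  · -- left cancel
    intro a b
    obtain ⟨x, rfl⟩ := hsurj a
    obtain ⟨y, rfl⟩ := hsurj b
    rw [key x, hεB]
    have ht : (TensorProduct.map B B (Coalgebra.comul (R := k) x)) ⊗ₜ[k] (B y) =
        TensorProduct.map (TensorProduct.map B B) B ((Coalgebra.comul (R := k) x) ⊗ₜ[k] y) := by
      simp [TensorProduct.map_tmul]
    rw [ht]
    have := LinearMap.congr_fun (myL4 χ B hB) ((Coalgebra.comul (R := k) x) ⊗ₜ[k] y)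
    simp only [LinearMap.comp_apply, LinearEquiv.coe_coe] at this
    rw [this, hχ.left_cancel x y, map_smul]
  · -- right cancel
    intro a b
    obtain ⟨x, rfl⟩ := hsurj a
    obtain ⟨y, rfl⟩ := hsurj b
    rw [key x, hεB]
    have ht : (B y) ⊗ₜ[k] (TensorProduct.map B B (Coalgebra.comul (R := k) x)) =
        TensorProduct.map B (TensorProduct.map B B) (y ⊗ₜ[k] (Coalgebra.comul (R := k) x)) := by
      simp [TensorProduct.map_tmul]
    rw [ht]
    have := LinearMap.congr_fun (myL1 χ B hB).symm (y ⊗ₜ[k] (Coalgebra.comul (R := k) x))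
    simp only [LinearMap.comp_apply] at this
    rw [this, hχ.right_cancel x y, map_smul]
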